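/- (Proposition 4, key computation) Fix K ≥ 2 and M > 0. Among all vectors w ∈ ℝ^K with ∑_k w_k = 0 and ‖w‖_∞ ≤ M, the softmax probability of coordinate y, softmax_y(w) = exp(w_y)/∑_k exp(w_k), is maximized uniquely at the vector with w_y = M and w_k = −M/(K−1) for all k ≠ y. Moreover, at this maximizer, for any 0 < ρ ≤ M/(K−1) one has ∑_{k=1}^K Φ_ρ(μ_k(w, y)) = 0. -/

import Mathlib

open MeasureTheory Finset

/-- The ramp loss with margin `ρ`. -/
noncomputable def ramp (ρ x : ℝ) : ℝ :=
  if ρ ≤ x then 0 else if x ≤ 0 then 1 else 1 - x / ρ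

/-- The absolute margin function: `margin w y k = w k` if `k = y`, else `-w k`. -/
def margin {K : ℕ} (w : Fin K → ℝ) (y k : Fin K) : ℝ :=
  if k = y then w k else -w k

/-- Entrywise L1 distance between the matrices of absolute margin violations
`M^ρ(u)` and `M^ρ(v)`, where `M^ρ_{i,j}(w) = Φ_ρ(μ_i(w,j))`. -/
noncomputable def l1diff (ρ : ℝ) {K : ℕ} (u v : Fin K → ℝ) : ℝ :=
  ∑ i : Fin K, ∑ j : Fin K, |ramp ρ (margin u j i) - ramp ρ (margin v j i)|

/-- The margin-based multi-class loss `L^ρ(w, y) = ∑_k Φ_ρ(μ_k(w,y))`. -/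
noncomputable def Lmargin (ρ : ℝ) {K : ℕ} (w : Fin K → ℝ) (y : Fin K) : ℝ :=
  ∑ k : Fin K, ramp ρ (margin w y k)

theorem prop4_softmax_maximizer {K : ℕ} (hK : 2 ≤ K) (M : ℝ) (hM : 0 < M)
    (y : Fin K) :
    (∀ w : Fin K → ℝ, ∑ k : Fin K, w k = 0 → (∀ k, |w k| ≤ M) →
      Real.exp (w y) / (∑ k : Fin K, Real.exp (w k)) ≤
      Real.exp ((fun k => if k = y then M else -M / ((K : ℝ) - 1)) y) /
        (∑ k : Fin K, Real.exp ((fun k => if k = y then M else -M / ((K : ℝ) - 1)) k))) ∧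
    (∀ w : Fin K → ℝ, ∑ k : Fin K, w k = 0 → (∀ k, |w k| ≤ M) →
      Real.exp (w y) / (∑ k : Fin K, Real.exp (w k)) =
      Real.exp ((fun k => if k = y then M else -M / ((K : ℝ) - 1)) y) /
        (∑ k : Fin K, Real.exp ((fun k => if k = y then M else -M / ((K : ℝ) - 1)) k)) →
      w = fun k => if k = y then M else -M / ((K : ℝ) - 1)) ∧
    (∀ ρ : ℝ, 0 < ρ → ρ ≤ M / ((K : ℝ) - 1) →
      Lmargin ρ (fun k => if k = y then M else -M / ((K : ℝ) - 1)) y = 0) := by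
  haveI hNT : Nontrivial (Fin K) := Fin.nontrivial_iff_two_le.mpr hK
  have hK1 : (1:ℝ) ≤ (K:ℝ) - 1 := by
    have : (2:ℝ) ≤ (K:ℝ) := by exact_mod_cast hK
    linarith
  set n : ℝ := (K:ℝ) - 1 with hn
  have hn0 : 0 < n := by linarith
  set c : ℝ := M / n with hcdef
  have hc0 : 0 < c := div_pos hM hn0
  have hcM : c ≤ M := by
    rw [hcdef, div_le_iff₀ hn0]; nlinarith
  set ws : Fin K → ℝ := fun k => if k = y then M else -M / n with hws
  have hwsy : ws y = M := by simp [hws]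
  have hwsk : ∀ k, k ≠ y → ws k = -c := by
    intro k hk; simp [hws, hk, hcdef, neg_div]
  have hcardR : ((univ.erase y).card : ℝ) = n := by
    rw [card_erase_of_mem (mem_univ y), card_univ, Fintype.card_fin, hn]
    push_cast [Nat.cast_sub (by omega : 1 ≤ K)]
    ring
  -- value of the candidate's softmax denominator
  have hSstar : ∑ k : Fin K, Real.exp (ws k) = Real.exp M + n * Real.exp (-c) := by
    rw [← Finset.sum_erase_add _ _ (mem_univ y), hwsy]
    rw [Finset.sum_congr rfl (fun k hk => by rw [hwsk k (mem_erase.mp hk).1])]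
    rw [Finset.sum_const, nsmul_eq_mul, hcardR]
    ring
  have hSpos : ∀ w : Fin K → ℝ, 0 < ∑ k : Fin K, Real.exp (w k) := by
    intro w
    exact Finset.sum_pos (fun i _ => Real.exp_pos _) univ_nonempty
  -- erase-sum identity
  have herase : ∀ w : Fin K → ℝ, ∑ k : Fin K, w k = 0 →
      ∑ k ∈ univ.erase y, w k = -(w y) := by
    intro w hsum
    have := Finset.sum_erase_add univ w (mem_univ y)
    rw [hsum] at this
    linarith
  have hweights : ∑ _k ∈ univ.erase y, (1/n) = 1 := by
    rw [Finset.sum_const, nsmul_eq_mul, hcardR]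
    field_simp
  -- Jensen
  have jensen : ∀ w : Fin K → ℝ, ∑ k : Fin K, w k = 0 →
      n * Real.exp (-(w y)/n) ≤ ∑ k ∈ univ.erase y, Real.exp (w k) := by
    intro w hsum
    have h := convexOn_exp.map_sum_le (t := univ.erase y) (w := fun _ => 1/n) (p := w)
      (fun i _ => by positivity) hweights (fun i _ => Set.mem_univ _)
    simp only [smul_eq_mul, ← Finset.mul_sum, herase w hsum] at h
    have h2 : Real.exp (-(w y)/n) ≤ (1/n) * ∑ k ∈ univ.erase y, Real.exp (w k) := by
      convert h using 2
      · rfl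
      ring
    calc n * Real.exp (-(w y)/n)
        ≤ n * ((1/n) * ∑ k ∈ univ.erase y, Real.exp (w k)) :=
          mul_le_mul_of_nonneg_left h2 hn0.le
      _ = ∑ k ∈ univ.erase y, Real.exp (w k) := by field_simp
  -- scalar comparison
  have hB : ∀ w : Fin K → ℝ, (∀ k, |w k| ≤ M) →
      Real.exp (w y) * Real.exp (-c) ≤ Real.exp M * Real.exp (-(w y)/n) := by
    intro w hb
    have hwy : w y ≤ M := (abs_le.mp (hb y)).2
    rw [← Real.exp_add, ← Real.exp_add, Real.exp_le_exp]
    have hd : w y / n ≤ c := by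
      rw [hcdef]
      exact (div_le_div_iff_of_pos_right hn0).mpr hwy
    rw [neg_div]
    linarith
  -- cross-multiplied key inequality
  have key : ∀ w : Fin K → ℝ, ∑ k : Fin K, w k = 0 → (∀ k, |w k| ≤ M) →
      Real.exp (w y) * (Real.exp M + n * Real.exp (-c)) ≤
      Real.exp M * ∑ k : Fin K, Real.exp (w k) := by
    intro w hsum hb
    have h1 := jensen w hsum
    have h2 := hB w hb
    have h3 : ∑ k : Fin K, Real.exp (w k)
        = (∑ k ∈ univ.erase y, Real.exp (w k)) + Real.exp (w y) :=
      (Finset.sum_erase_add _ _ (mem_univ y)).symm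
    have hexpM : (0:ℝ) ≤ Real.exp M := (Real.exp_pos M).le
    calc Real.exp (w y) * (Real.exp M + n * Real.exp (-c))
        = Real.exp M * Real.exp (w y) + n * (Real.exp (w y) * Real.exp (-c)) := by ring
      _ ≤ Real.exp M * Real.exp (w y) + n * (Real.exp M * Real.exp (-(w y)/n)) :=
          add_le_add_right (mul_le_mul_of_nonneg_left h2 hn0.le) _
      _ = Real.exp M * Real.exp (w y) + Real.exp M * (n * Real.exp (-(w y)/n)) := by ring
      _ ≤ Real.exp M * Real.exp (w y)
            + Real.exp M * ∑ k ∈ univ.erase y, Real.exp (w k) :=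
          add_le_add_right (mul_le_mul_of_nonneg_left h1 hexpM) _
      _ = Real.exp M * ∑ k : Fin K, Real.exp (w k) := by rw [h3]; ring
  refine ⟨?_, ?_, ?_⟩
  · intro w hsum hb
    rw [div_le_div_iff₀ (hSpos w) (hSpos ws)]
    simp only [hwsy]
    rw [hSstar]
    exact key w hsum hb
  · intro w hsum hb heq
    rw [div_eq_div_iff (hSpos w).ne' (hSpos ws).ne'] at heq
    simp only [hwsy] at heq
    rw [hSstar] at heq
    have h1 := jensen w hsum
    have h2 := hB w hb
    have h3 : ∑ k : Fin K, Real.exp (w k)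
        = (∑ k ∈ univ.erase y, Real.exp (w k)) + Real.exp (w y) :=
      (Finset.sum_erase_add _ _ (mem_univ y)).symm
    have hexpM : (0:ℝ) < Real.exp M := Real.exp_pos M
    rw [h3] at heq
    -- both inequalities are equalities
    have heq2 : n * (Real.exp (w y) * Real.exp (-c))
        = Real.exp M * ∑ k ∈ univ.erase y, Real.exp (w k) := by
      linear_combination heq
    have t1 : Real.exp M * (n * Real.exp (-(w y)/n))
        ≤ Real.exp M * ∑ k ∈ univ.erase y, Real.exp (w k) :=
      mul_le_mul_of_nonneg_left h1 hexpM.le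
    have t2 : n * (Real.exp (w y) * Real.exp (-c))
        ≤ n * (Real.exp M * Real.exp (-(w y)/n)) :=
      mul_le_mul_of_nonneg_left h2 hn0.le
    have t1' : n * (Real.exp M * Real.exp (-(w y)/n))
        ≤ n * (Real.exp (w y) * Real.exp (-c)) := by
      calc n * (Real.exp M * Real.exp (-(w y)/n))
          = Real.exp M * (n * Real.exp (-(w y)/n)) := by ring
        _ ≤ Real.exp M * ∑ k ∈ univ.erase y, Real.exp (w k) := t1
        _ = n * (Real.exp (w y) * Real.exp (-c)) := heq2.symm
    have hBeq : Real.exp (w y) * Real.exp (-c) = Real.exp M * Real.exp (-(w y)/n) :=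
      mul_left_cancel₀ hn0.ne' (le_antisymm t2 t1')
    have hwyM : w y = M := by
      rw [← Real.exp_add, ← Real.exp_add, Real.exp_eq_exp, hcdef, neg_div] at hBeq
      have hprod := congrArg (fun t => t * n) hBeq
      simp only [add_mul, neg_mul, div_mul_cancel₀ _ hn0.ne'] at hprod
      have hz : (w y - M) * (n + 1) = 0 := by linear_combination hprod
      rcases mul_eq_zero.mp hz with h | h
      · linarith
      · linarith
    have hJeq : ∑ k ∈ univ.erase y, Real.exp (w k) = n * Real.exp (-(w y)/n) := by
      have h5 : Real.exp M * (n * Real.exp (-(w y)/n))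
          = Real.exp M * ∑ k ∈ univ.erase y, Real.exp (w k) := by
        rw [← heq2, hBeq]; ring
      exact (mul_left_cancel₀ hexpM.ne' h5).symm
    -- all off-y coordinates are equal, by strict convexity
    have hall : ∀ j ∈ univ.erase y, ∀ k ∈ univ.erase y, w j = w k := by
      apply strictConvexOn_exp.eq_of_le_map_sum (w := fun _ => 1/n) (p := w)
        (fun i _ => by positivity) hweights (fun i _ => Set.mem_univ _)
      simp only [smul_eq_mul, ← Finset.mul_sum, herase w hsum]
      apply le_of_eq
      rw [hJeq, ← mul_assoc, one_div, inv_mul_cancel₀ hn0.ne', one_mul]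
      congr 1
      ring
    obtain ⟨j0, hj0⟩ := exists_ne y
    have hj0' : j0 ∈ univ.erase y := mem_erase.mpr ⟨hj0, mem_univ _⟩
    have hsumerase : ∑ k ∈ univ.erase y, w k = -M := by
      rw [herase w hsum, hwyM]
    have hconst : ∑ k ∈ univ.erase y, w k = n * w j0 := by
      rw [Finset.sum_congr rfl (fun k hk => hall k hk j0 hj0'), Finset.sum_const,
        nsmul_eq_mul, hcardR]
    rw [hsumerase] at hconst
    have hj0val : w j0 = -c := by
      rw [hcdef, ← neg_div, eq_div_iff hn0.ne']
      linear_combination -hconst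
    funext k
    by_cases hk : k = y
    · rw [hk, hwyM, hwsy]
    · rw [hall k (mem_erase.mpr ⟨hk, mem_univ _⟩) j0 hj0', hj0val, hwsk k hk]
  · intro ρ hρ0 hρc
    have hρc' : ρ ≤ c := by simpa [hcdef] using hρc
    unfold Lmargin
    apply Finset.sum_eq_zero
    intro k _
    have hramp : ∀ x : ℝ, ρ ≤ x → ramp ρ x = 0 := fun x hx => by simp [ramp, hx]
    rcases eq_or_ne k y with hk | hk
    · have hm : margin ws y k = M := by rw [margin, if_pos hk, hk, hwsy]
      rw [hm]
      exact hramp M (hρc'.trans hcM)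
    · have hm : margin ws y k = c := by
        rw [margin, if_neg hk, hwsk k hk]
        ring
      rw [hm]
      exact hramp c hρc'
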